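/- Let θ ∈ [α/2, α] with θ > 0, fix ε ∈ (0,1), let m be a nonnegative integer, and let v₀, v₁ ∈ L¹(ℝⁿ). Then there exists C > 0 (depending only on n, m, δ, α, θ, ε) such that for all t ≥ 0, ( ∫_{{ξ : 0 < |ξ| < ε}} |ξ|^{2m} |∂ₜv̂(t,ξ)|² dξ )^{1/2} ≤ C·( ‖v₀‖_{L¹}·(1+t)^{−(n/4+m/2+α/2)/θ} + ‖v₁‖_{L¹}·(1+t)^{−(n/4+m/2)/θ} ). -/

import Mathlib

open MeasureTheory FourierTransform

/-- The eigenvalue `λ₊(ξ)`, with the principal complex square root. -/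
noncomputable def lamP (n : ℕ) (δ α θ : ℝ) (ξ : EuclideanSpace ℝ (Fin n)) : ℂ :=
  ((‖ξ‖ ^ (2 * θ) / (2 * (1 + ‖ξ‖ ^ (2 * δ))) : ℝ) : ℂ) *
    (-1 + ((1 - 4 * ‖ξ‖ ^ (2 * (α - 2 * θ)) * (1 + ‖ξ‖ ^ (2 * δ)) : ℝ) : ℂ) ^ (1 / 2 : ℂ))

/-- The eigenvalue `λ₋(ξ)`, with the principal complex square root. -/
noncomputable def lamM (n : ℕ) (δ α θ : ℝ) (ξ : EuclideanSpace ℝ (Fin n)) : ℂ :=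
  ((‖ξ‖ ^ (2 * θ) / (2 * (1 + ‖ξ‖ ^ (2 * δ))) : ℝ) : ℂ) *
    (-1 - ((1 - 4 * ‖ξ‖ ^ (2 * (α - 2 * θ)) * (1 + ‖ξ‖ ^ (2 * δ)) : ℝ) : ℂ) ^ (1 / 2 : ℂ))

/-- The Fourier transform `v̂(t,ξ) = K̂₀(t,ξ) v̂₀(ξ) + K̂₁(t,ξ) v̂₁(ξ)` of the solution. -/
noncomputable def vhat (n : ℕ) (δ α θ : ℝ) (v0 v1 : EuclideanSpace ℝ (Fin n) → ℂ)
    (t : ℝ) (ξ : EuclideanSpace ℝ (Fin n)) : ℂ :=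
  (lamP n δ α θ ξ * Complex.exp (lamM n δ α θ ξ * t)
      - lamM n δ α θ ξ * Complex.exp (lamP n δ α θ ξ * t)) /
      (lamP n δ α θ ξ - lamM n δ α θ ξ) * FourierTransform.fourier v0 ξ
    + (Complex.exp (lamP n δ α θ ξ * t) - Complex.exp (lamM n δ α θ ξ * t)) /
      (lamP n δ α θ ξ - lamM n δ α θ ξ) * FourierTransform.fourier v1 ξ

/-- The time derivative `∂ₜv̂(t,ξ) = ∂ₜK̂₀(t,ξ) v̂₀(ξ) + ∂ₜK̂₁(t,ξ) v̂₁(ξ)`. -/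
noncomputable def dtvhat (n : ℕ) (δ α θ : ℝ) (v0 v1 : EuclideanSpace ℝ (Fin n) → ℂ)
    (t : ℝ) (ξ : EuclideanSpace ℝ (Fin n)) : ℂ :=
  lamP n δ α θ ξ * lamM n δ α θ ξ *
      (Complex.exp (lamM n δ α θ ξ * t) - Complex.exp (lamP n δ α θ ξ * t)) /
      (lamP n δ α θ ξ - lamM n δ α θ ξ) * FourierTransform.fourier v0 ξ
    + (lamP n δ α θ ξ * Complex.exp (lamP n δ α θ ξ * t)
        - lamM n δ α θ ξ * Complex.exp (lamM n δ α θ ξ * t)) /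
      (lamP n δ α θ ξ - lamM n δ α θ ξ) * FourierTransform.fourier v1 ξ

lemma cpow_half_of_neg {w : ℝ} (hw : w < 0) :
    ((w : ℂ)) ^ (1 / 2 : ℂ) = (Real.sqrt (-w) : ℂ) * Complex.I := by
  rw [Complex.ofReal_cpow_of_nonpos hw.le]
  have h1 : ((-w : ℝ) : ℂ) ^ (1 / 2 : ℂ) = ((Real.sqrt (-w) : ℝ) : ℂ) := by
    rw [Real.sqrt_eq_rpow, Complex.ofReal_cpow (by linarith)]
    norm_num
  have h2 : Complex.exp (Real.pi * Complex.I * (1 / 2 : ℂ)) = Complex.I := by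
    have : (Real.pi : ℂ) * Complex.I * (1 / 2 : ℂ) = (((Real.pi / 2 : ℝ)) : ℂ) * Complex.I := by
      push_cast; ring
    rw [this, Complex.exp_mul_I]
    simp [← Complex.ofReal_cos, ← Complex.ofReal_sin]
  push_cast at h1
  rw [h1, h2]

lemma abs_neg_one_add_mul_I (s : ℝ) :
    ‖-1 + (s:ℂ) * Complex.I‖ = Real.sqrt (1 + s^2) := by
  rw [Complex.norm_def, Complex.normSq_apply]
  simp
  ring_nf

lemma abs_neg_one_sub_mul_I (s : ℝ) :
    ‖-1 - (s:ℂ) * Complex.I‖ = Real.sqrt (1 + s^2) := by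
  rw [Complex.norm_def, Complex.normSq_apply]
  simp
  ring_nf

lemma re_mul_aux (ρ s t : ℝ) :
    (((ρ:ℝ):ℂ) * (-1 + (s:ℂ) * Complex.I) * ((t:ℝ):ℂ)).re = -(ρ*t) := by
  simp [Complex.mul_re, Complex.mul_im]

lemma fi_bound {n : ℕ} (v : EuclideanSpace ℝ (Fin n) → ℂ) (ξ : EuclideanSpace ℝ (Fin n)) :
    ‖FourierTransform.fourier v ξ‖ ≤ ∫ x, ‖v x‖ := by
  exact VectorFourier.norm_fourierIntegral_le_integral_norm _ _ _ _ _

lemma rpow_mul_exp_neg_le (p : ℝ) (hp : 0 ≤ p) :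
    ∃ C : ℝ, 0 < C ∧ ∀ x : ℝ, 0 ≤ x → x ^ p * Real.exp (-x) ≤ C := by
  set k := ⌈p⌉₊ with hk
  refine ⟨(k.factorial : ℝ), by positivity, fun x hx => ?_⟩
  rcases le_total x 1 with h1 | h1
  · have h2 : x ^ p ≤ 1 := Real.rpow_le_one hx h1 hp
    have h3 : Real.exp (-x) ≤ 1 := Real.exp_le_one_iff.mpr (by linarith)
    have h4 : (1:ℝ) ≤ (k.factorial : ℝ) := by
      exact_mod_cast Nat.one_le_iff_ne_zero.mpr (Nat.factorial_ne_zero k)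
    nlinarith [Real.exp_pos (-x), Real.rpow_nonneg hx p]
  · have h2 : x ^ p ≤ x ^ (k : ℝ) :=
      Real.rpow_le_rpow_of_exponent_le h1 (Nat.le_ceil p)
    have h3 : x ^ (k:ℝ) = x ^ (k:ℕ) := by rw [Real.rpow_natCast]
    have h4 : x ^ (k:ℕ) / (k.factorial : ℝ) ≤ Real.exp x := Real.pow_div_factorial_le_exp x (by linarith) k
    have h5 : x ^ (k:ℕ) ≤ (k.factorial : ℝ) * Real.exp x := by
      have hf : (0:ℝ) < (k.factorial : ℝ) := by positivity
      rw [div_le_iff₀ hf] at h4; linarith [h4]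
    calc x ^ p * Real.exp (-x) ≤ ((k.factorial : ℝ) * Real.exp x) * Real.exp (-x) := by
          apply mul_le_mul_of_nonneg_right _ (Real.exp_pos _).le
          calc x ^ p ≤ x ^ (k:ℝ) := h2
            _ = x ^ (k:ℕ) := h3
            _ ≤ (k.factorial : ℝ) * Real.exp x := h5
      _ = (k.factorial : ℝ) := by rw [mul_assoc, ← Real.exp_add]; simp

lemma sup_bound (a N b c : ℝ) (ha : 0 ≤ a) (hN : 0 ≤ N) (hb : 0 < b) (hc : 0 < c) :
    ∃ C : ℝ, 0 < C ∧ ∀ X : ℝ, 0 ≤ X →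
      X ^ a * (1 + X) ^ N * Real.exp (-(c * X ^ b)) ≤ C := by
  obtain ⟨C₀, hC₀, hC⟩ := rpow_mul_exp_neg_le ((a + N) / b) (by positivity)
  refine ⟨(2:ℝ) ^ (a + N) * max 1 (c ^ (-((a+N)/b)) * C₀), by positivity, fun X hX => ?_⟩
  have h2 : (0:ℝ) < 2 ^ (a+N) := by positivity
  have hexp1 : Real.exp (-(c * X ^ b)) ≤ 1 := by
    rw [Real.exp_le_one_iff]
    have : 0 ≤ c * X ^ b := by positivity
    linarith
  have hXa : 0 ≤ X ^ a := Real.rpow_nonneg hX a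
  rcases le_total X 1 with h1 | h1
  · have e1 : X ^ a ≤ 1 := Real.rpow_le_one hX h1 ha
    have e2 : (1+X) ^ N ≤ 2 ^ (a+N) :=
      (Real.rpow_le_rpow (by linarith) (by linarith) hN).trans
        (Real.rpow_le_rpow_of_exponent_le one_le_two (by linarith))
    have e5 : (0:ℝ) < (1+X) ^ N := Real.rpow_pos_of_pos (by linarith) N
    calc X ^ a * (1 + X) ^ N * Real.exp (-(c * X ^ b))
        ≤ 1 * (2 ^ (a+N)) * 1 := by
          apply mul_le_mul _ hexp1 (Real.exp_pos _).le (by positivity)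
          exact mul_le_mul e1 e2 e5.le zero_le_one
      _ ≤ (2:ℝ) ^ (a + N) * max 1 (c ^ (-((a+N)/b)) * C₀) := by
          rw [one_mul]
          nlinarith [le_max_left (1:ℝ) (c ^ (-((a+N)/b)) * C₀)]
  · -- X ≥ 1
    have key : X ^ (a+N) * Real.exp (-(c * X ^ b)) ≤ c ^ (-((a+N)/b)) * C₀ := by
      have hXb : (0:ℝ) < X ^ b := Real.rpow_pos_of_pos (by linarith) b
      have hbne : b ≠ 0 := hb.ne'
      have hid : X ^ (a+N) = c ^ (-((a+N)/b)) * (c * X ^ b) ^ ((a+N)/b) := by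
        rw [Real.mul_rpow hc.le hXb.le, ← Real.rpow_mul hX,
          show b * ((a+N)/b) = a + N by field_simp, ← mul_assoc,
          ← Real.rpow_add hc, neg_add_cancel, Real.rpow_zero, one_mul]
      calc X ^ (a+N) * Real.exp (-(c * X ^ b))
          = c ^ (-((a+N)/b)) * ((c * X ^ b) ^ ((a+N)/b) * Real.exp (-(c * X ^ b))) := by
            rw [hid]; ring
        _ ≤ c ^ (-((a+N)/b)) * C₀ := by
            apply mul_le_mul_of_nonneg_left (hC _ (by positivity))
              (Real.rpow_nonneg hc.le _)
    have e1 : X ^ a * (1+X) ^ N ≤ 2 ^ (a+N) * X ^ (a+N) := by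
      have h1X : (0:ℝ) < 1 + X := by linarith
      calc X ^ a * (1+X) ^ N ≤ (1+X) ^ a * (1+X) ^ N :=
            mul_le_mul_of_nonneg_right (Real.rpow_le_rpow hX (by linarith) ha)
              (Real.rpow_nonneg h1X.le N)
        _ = (1+X) ^ (a+N) := (Real.rpow_add h1X a N).symm
        _ ≤ (2*X) ^ (a+N) := Real.rpow_le_rpow h1X.le (by linarith) (by positivity)
        _ = 2 ^ (a+N) * X ^ (a+N) := Real.mul_rpow (by norm_num) hX
    calc X ^ a * (1 + X) ^ N * Real.exp (-(c * X ^ b))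
        ≤ (2 ^ (a+N) * X ^ (a+N)) * Real.exp (-(c * X ^ b)) :=
          mul_le_mul_of_nonneg_right e1 (Real.exp_pos _).le
      _ = 2 ^ (a+N) * (X ^ (a+N) * Real.exp (-(c * X ^ b))) := by ring
      _ ≤ 2 ^ (a+N) * (c ^ (-((a+N)/b)) * C₀) := mul_le_mul_of_nonneg_left key h2.le
      _ ≤ (2:ℝ) ^ (a + N) * max 1 (c ^ (-((a+N)/b)) * C₀) :=
          mul_le_mul_of_nonneg_left (le_max_right _ _) h2.le

lemma Jbound (n : ℕ) (hn : 1 ≤ n) (s θ ε : ℝ) (hs : 0 ≤ s) (hθ : 0 < θ)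
    (hε0 : 0 < ε) (hε1 : ε < 1) :
    ∃ C : ℝ, 0 < C ∧ ∀ t : ℝ, 0 ≤ t →
      (∫ ξ in {ξ : EuclideanSpace ℝ (Fin n) | 0 < ‖ξ‖ ∧ ‖ξ‖ < ε},
        ‖ξ‖ ^ (2*s) * Real.exp (-(‖ξ‖ ^ (2*θ) * t / 2)))
      ≤ C * (1+t) ^ (-(((n:ℝ)/2 + s)/θ)) := by
  set E := EuclideanSpace ℝ (Fin n)
  set S : Set E := {ξ : E | 0 < ‖ξ‖ ∧ ‖ξ‖ < ε} with hS
  have hSmeas : MeasurableSet S := by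
    have : S = (fun ξ : E => ‖ξ‖) ⁻¹' (Set.Ioo 0 ε) := rfl
    rw [this]
    exact (isOpen_Ioo.preimage continuous_norm).measurableSet
  set F : E → ℝ := fun x => ‖x‖ ^ (2*s) * Real.exp (-(‖x‖ ^ (2*θ) / 2)) with hF
  have hFnn : ∀ x, 0 ≤ F x := fun x => by positivity
  have hFcont : Continuous F := by
    apply Continuous.mul
    · exact continuous_norm.rpow_const (fun x => Or.inr (by positivity))
    · exact Real.continuous_exp.comp
        (((continuous_norm.rpow_const (fun x => Or.inr (by positivity))).div_const 2).neg)
  have hFmeas : Measurable F := hFcont.measurable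
  have hFint : Integrable F := by
    obtain ⟨C₁, hC₁, hb⟩ := sup_bound (2*s) ((n:ℝ)+1) (2*θ) (1/2)
      (by positivity) (by positivity) (by positivity) (by norm_num)
    have hg : Integrable (fun x : E => C₁ * (1+‖x‖) ^ (-((n:ℝ)+1))) := by
      apply Integrable.const_mul
      apply integrable_one_add_norm (r := (n:ℝ)+1)
      rw [finrank_euclideanSpace_fin]; linarith
    apply hg.mono' hFmeas.aestronglyMeasurable
    filter_upwards with x
    have h1x : (0:ℝ) < 1 + ‖x‖ := by positivity
    have hkey := hb ‖x‖ (norm_nonneg x)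
    rw [show (1/2 : ℝ) * ‖x‖ ^ (2*θ) = ‖x‖ ^ (2*θ) / 2 by ring] at hkey
    rw [Real.norm_eq_abs, abs_of_nonneg (hFnn x)]
    rw [Real.rpow_neg h1x.le, ← div_eq_mul_inv, le_div_iff₀ (by positivity)]
    calc F x * (1+‖x‖) ^ ((n:ℝ)+1)
        = ‖x‖ ^ (2*s) * (1+‖x‖) ^ ((n:ℝ)+1) * Real.exp (-(‖x‖ ^ (2*θ) / 2)) := by
          rw [hF]; ring
      _ ≤ C₁ := hkey
  set IF := ∫ x, F x with hIF
  have hIFnn : 0 ≤ IF := integral_nonneg hFnn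
  refine ⟨Real.exp (1/2) * (IF + 1), by positivity, fun t ht => ?_⟩
  set b := (1+t) ^ (1/(2*θ)) with hbdef
  have h1t : (0:ℝ) < 1 + t := by linarith
  have hb1 : 1 ≤ b := Real.one_le_rpow (by linarith) (by positivity)
  have hbpos : 0 < b := lt_of_lt_of_le one_pos hb1
  -- scaling identity
  have hscale : ∫ x, F (b • x) = ((b:ℝ) ^ (n:ℕ))⁻¹ * IF := by
    have := MeasureTheory.Measure.integral_comp_smul_of_nonneg (volume : Measure E) F b
      (hR := hbpos.le)
    rw [this, finrank_euclideanSpace_fin, smul_eq_mul]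
  have hcomp_int : Integrable (fun x : E => F (b • x)) :=
    (MeasureTheory.integrable_comp_smul_iff (volume : Measure E) F hbpos.ne').mpr hFint
  -- pointwise domination on S
  have hpt : ∀ ξ ∈ S, ‖ξ‖ ^ (2*s) * Real.exp (-(‖ξ‖ ^ (2*θ) * t / 2))
      ≤ Real.exp (1/2) * ((1+t) ^ (-(s/θ)) * F (b • ξ)) := by
    intro ξ hξ
    obtain ⟨hξ0, hξε⟩ := hξ
    have hr1 : ‖ξ‖ ≤ 1 := le_of_lt (lt_trans hξε hε1)
    have hr2θ : ‖ξ‖ ^ (2*θ) ≤ 1 := Real.rpow_le_one (norm_nonneg ξ) hr1 (by positivity)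
    have hnorm : ‖b • ξ‖ = b * ‖ξ‖ := by
      rw [norm_smul, Real.norm_eq_abs, abs_of_nonneg hbpos.le]
    have hb2s : (b * ‖ξ‖) ^ (2*s) = (1+t) ^ (s/θ) * ‖ξ‖ ^ (2*s) := by
      rw [Real.mul_rpow hbpos.le (norm_nonneg ξ), hbdef, ← Real.rpow_mul h1t.le]
      congr 2
      field_simp
    have hb2θ : (b * ‖ξ‖) ^ (2*θ) = (1+t) * ‖ξ‖ ^ (2*θ) := by
      rw [Real.mul_rpow hbpos.le (norm_nonneg ξ), hbdef, ← Real.rpow_mul h1t.le]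
      rw [show 1/(2*θ) * (2*θ) = 1 by field_simp, Real.rpow_one]
    have hFb : F (b • ξ) = (1+t) ^ (s/θ) * ‖ξ‖ ^ (2*s)
        * Real.exp (-((1+t) * ‖ξ‖ ^ (2*θ) / 2)) := by
      simp only [hF, hnorm, hb2s, hb2θ]
      try ring
    have hexp : Real.exp (-(‖ξ‖ ^ (2*θ) * t / 2))
        ≤ Real.exp (1/2) * Real.exp (-((1+t) * ‖ξ‖ ^ (2*θ) / 2)) := by
      rw [← Real.exp_add, Real.exp_le_exp]
      nlinarith
    calc ‖ξ‖ ^ (2*s) * Real.exp (-(‖ξ‖ ^ (2*θ) * t / 2))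
        ≤ ‖ξ‖ ^ (2*s) * (Real.exp (1/2) * Real.exp (-((1+t) * ‖ξ‖ ^ (2*θ) / 2))) :=
          mul_le_mul_of_nonneg_left hexp (Real.rpow_nonneg (norm_nonneg ξ) _)
      _ = Real.exp (1/2) * ((1+t) ^ (-(s/θ)) *
            ((1+t) ^ (s/θ) * ‖ξ‖ ^ (2*s) * Real.exp (-((1+t) * ‖ξ‖ ^ (2*θ) / 2)))) := by
          rw [show (1+t) ^ (-(s/θ)) = ((1+t) ^ (s/θ))⁻¹ by rw [Real.rpow_neg h1t.le]]
          have : (0:ℝ) < (1+t) ^ (s/θ) := Real.rpow_pos_of_pos h1t _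
          field_simp
      _ = Real.exp (1/2) * ((1+t) ^ (-(s/θ)) * F (b • ξ)) := by rw [hFb]
  -- combine
  have step1 : (∫ ξ in S, ‖ξ‖ ^ (2*s) * Real.exp (-(‖ξ‖ ^ (2*θ) * t / 2)))
      ≤ ∫ ξ in S, Real.exp (1/2) * ((1+t) ^ (-(s/θ)) * F (b • ξ)) := by
    apply integral_mono_of_nonneg
    · filter_upwards with ξ; positivity
    · exact ((hcomp_int.const_mul _).const_mul _).restrict
    · exact (ae_restrict_iff' hSmeas).mpr (Filter.Eventually.of_forall hpt)
  have step2 : (∫ ξ in S, Real.exp (1/2) * ((1+t) ^ (-(s/θ)) * F (b • ξ)))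
      ≤ ∫ ξ : E, Real.exp (1/2) * ((1+t) ^ (-(s/θ)) * F (b • ξ)) := by
    apply setIntegral_le_integral ((hcomp_int.const_mul _).const_mul _)
    filter_upwards with ξ
    have := hFnn (b • ξ); positivity
  have step3 : (∫ ξ : E, Real.exp (1/2) * ((1+t) ^ (-(s/θ)) * F (b • ξ)))
      = Real.exp (1/2) * ((1+t) ^ (-(s/θ)) * (((b:ℝ) ^ (n:ℕ))⁻¹ * IF)) := by
    rw [integral_const_mul, integral_const_mul, hscale]
  have hbn : ((b:ℝ) ^ (n:ℕ))⁻¹ = (1+t) ^ (-((n:ℝ)/(2*θ))) := by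
    rw [hbdef, ← Real.rpow_natCast ((1+t) ^ (1/(2*θ))) n, ← Real.rpow_mul h1t.le,
      ← Real.rpow_neg h1t.le]
    congr 1
    field_simp
  calc (∫ ξ in S, ‖ξ‖ ^ (2*s) * Real.exp (-(‖ξ‖ ^ (2*θ) * t / 2)))
      ≤ Real.exp (1/2) * ((1+t) ^ (-(s/θ)) * (((b:ℝ) ^ (n:ℕ))⁻¹ * IF)) := by
        rw [← step3]; exact le_trans step1 step2
    _ = Real.exp (1/2) * IF * ((1+t) ^ (-(s/θ)) * (1+t) ^ (-((n:ℝ)/(2*θ)))) := by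
        rw [hbn]; ring
    _ = Real.exp (1/2) * IF * (1+t) ^ (-(((n:ℝ)/2 + s)/θ)) := by
        rw [← Real.rpow_add h1t]
        congr 2
        field_simp; ring
    _ ≤ Real.exp (1/2) * (IF + 1) * (1+t) ^ (-(((n:ℝ)/2 + s)/θ)) := by
        apply mul_le_mul_of_nonneg_right _ (Real.rpow_nonneg h1t.le _)
        nlinarith [Real.exp_pos (1/2 : ℝ)]

set_option maxHeartbeats 1000000 in
lemma pointwise_bound (n : ℕ) (δ α θ : ℝ) (hδ : 0 ≤ δ) (hα : 0 ≤ α)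
    (hθ1 : α / 2 ≤ θ) (hθ : 0 < θ)
    (v0 v1 : EuclideanSpace ℝ (Fin n) → ℂ) (t : ℝ) (ht : 0 ≤ t)
    (ξ : EuclideanSpace ℝ (Fin n)) (hξ0 : 0 < ‖ξ‖) (hξ1 : ‖ξ‖ < 1) :
    ‖dtvhat n δ α θ v0 v1 t ξ‖ ≤
      2 * Real.exp (-(‖ξ‖ ^ (2*θ) * t / 4)) *
        (‖ξ‖ ^ α * (∫ x, ‖v0 x‖) + (∫ x, ‖v1 x‖)) := by
  have hr0 : (0:ℝ) < ‖ξ‖ := hξ0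
  have hr1 : ‖ξ‖ < 1 := hξ1
  set r := ‖ξ‖ with hrdef
  -- basic quantities
  have hy0 : (0:ℝ) < r ^ (2*δ) := Real.rpow_pos_of_pos hr0 _
  have hy1 : r ^ (2*δ) ≤ 1 := Real.rpow_le_one hr0.le hr1.le (by positivity)
  have hx1 : (1:ℝ) ≤ r ^ (2*(α - 2*θ)) :=
    Real.one_le_rpow_of_pos_of_le_one_of_nonpos hr0 hr1.le (by linarith)
  set y := r ^ (2*δ) with hydef
  set x := r ^ (2*(α - 2*θ)) with hxdef
  set ρ := r ^ (2*θ) / (2*(1+y)) with hρdef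
  have hρ0 : 0 < ρ := by
    apply div_pos (Real.rpow_pos_of_pos hr0 _); linarith
  have hxy : (0:ℝ) ≤ x * y := mul_nonneg (by linarith) hy0.le
  have hw : (1 - 4 * r ^ (2*(α - 2*θ)) * (1 + r ^ (2*δ)) : ℝ) < 0 := by
    rw [← hxdef, ← hydef]
    have : 4 * x * (1+y) = 4*x + 4*(x*y) := by ring
    linarith
  set s := Real.sqrt (-(1 - 4 * x * (1 + y))) with hsdef
  have hs2 : s^2 = 4*x*(1+y) - 1 := by
    rw [hsdef, Real.sq_sqrt (by rw [← hxdef, ← hydef] at hw; linarith)]; ring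
  have hs0 : 0 < s := Real.sqrt_pos.mpr (by rw [← hxdef, ← hydef] at hw; linarith)
  have hs3 : 3 ≤ s^2 := by
    rw [hs2]
    have : 4 * x * (1+y) = 4*x + 4*(x*y) := by ring
    linarith
  -- eigenvalue identities
  have hP : lamP n δ α θ ξ = ((ρ:ℝ):ℂ) * (-1 + (s:ℂ) * Complex.I) := by
    rw [lamP, cpow_half_of_neg hw, ← hrdef, ← hxdef, ← hydef, ← hρdef, ← hsdef]
  have hM : lamM n δ α θ ξ = ((ρ:ℝ):ℂ) * (-1 - (s:ℂ) * Complex.I) := by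
    rw [lamM, cpow_half_of_neg hw, ← hrdef, ← hxdef, ← hydef, ← hρdef, ← hsdef]
  -- abs computations
  have habsP : ‖lamP n δ α θ ξ‖ = ρ * Real.sqrt (1 + s^2) := by
    rw [hP, norm_mul, Complex.norm_real, Real.norm_eq_abs, abs_of_pos hρ0, abs_neg_one_add_mul_I]
  have habsM : ‖lamM n δ α θ ξ‖ = ρ * Real.sqrt (1 + s^2) := by
    rw [hM, norm_mul, Complex.norm_real, Real.norm_eq_abs, abs_of_pos hρ0, abs_neg_one_sub_mul_I]
  have habsD : ‖lamP n δ α θ ξ - lamM n δ α θ ξ‖ = 2*ρ*s := by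
    have : lamP n δ α θ ξ - lamM n δ α θ ξ = ((2*ρ*s : ℝ):ℂ) * Complex.I := by
      rw [hP, hM]; push_cast; ring
    rw [this, norm_mul, Complex.norm_real, Real.norm_eq_abs, Complex.norm_I, mul_one,
      abs_of_pos (mul_pos (mul_pos two_pos hρ0) hs0)]
  have habsProd : ‖lamP n δ α θ ξ * lamM n δ α θ ξ‖ = ρ^2 * (1+s^2) := by
    have : lamP n δ α θ ξ * lamM n δ α θ ξ = ((ρ^2 * (1+s^2) : ℝ):ℂ) := by
      rw [hP, hM]; push_cast
      linear_combination (-(ρ:ℂ)^2*(s:ℂ)^2) * Complex.I_sq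
    rw [this, Complex.norm_real, Real.norm_eq_abs, abs_of_pos
      (mul_pos (pow_pos hρ0 2) (by positivity))]
  have habsExpP : ‖Complex.exp (lamP n δ α θ ξ * t)‖ = Real.exp (-(ρ*t)) := by
    rw [hP, Complex.norm_exp]
    congr 1
    simp [Complex.mul_re, Complex.mul_im]
  have habsExpM : ‖Complex.exp (lamM n δ α θ ξ * t)‖ = Real.exp (-(ρ*t)) := by
    rw [hM, Complex.norm_exp]
    congr 1
    simp [Complex.mul_re, Complex.mul_im]
  -- σ = r^(α-2θ)
  set σ := r ^ (α - 2*θ) with hσdef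
  have hσ0 : 0 < σ := Real.rpow_pos_of_pos hr0 _
  have hσx : σ^2 = x := by
    rw [hσdef, hxdef, ← Real.rpow_natCast (r ^ (α - 2*θ)) 2, ← Real.rpow_mul hr0.le]
    congr 1; push_cast; ring
  have hσr : r ^ (2*θ) * σ = r ^ α := by
    rw [hσdef, ← Real.rpow_add hr0]; congr 1; ring
  have hσs : σ ≤ s := by
    have h1 : σ^2 ≤ s^2 := by
      rw [hs2, hσx]
      have : 4 * x * (1+y) = 4*x + 4*(x*y) := by ring
      linarith
    calc σ = Real.sqrt (σ^2) := (Real.sqrt_sq hσ0.le).symm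
      _ ≤ Real.sqrt (s^2) := Real.sqrt_le_sqrt h1
      _ = s := Real.sqrt_sq hs0.le
  have hrα : (0:ℝ) < r ^ α := Real.rpow_pos_of_pos hr0 _
  -- kernel bounds
  have hsq : Real.sqrt (1+s^2) ≤ 2*s := by
    have h4s : 1+s^2 ≤ (2*s)^2 := by
      have : (2*s)^2 = 4*s^2 := by ring
      linarith
    calc Real.sqrt (1+s^2) ≤ Real.sqrt ((2*s)^2) := Real.sqrt_le_sqrt h4s
      _ = 2*s := Real.sqrt_sq (by linarith)
  have h2ρs : (0:ℝ) < 2*ρ*s := mul_pos (mul_pos two_pos hρ0) hs0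
  have hexpp := Real.exp_pos (-(ρ*t))
  have hr2θ : (0:ℝ) < r ^ (2*θ) := Real.rpow_pos_of_pos hr0 _
  have hT0 : ρ^2*(1+s^2) * (2*Real.exp (-(ρ*t))) / (2*ρ*s)
      ≤ 2 * r^α * Real.exp (-(ρ*t)) := by
    rw [div_le_iff₀ h2ρs]
    have h1 : ρ * (1+s^2) = 2 * r^(2*θ) * x := by
      rw [hρdef, hs2]; field_simp; ring
    have h2 : 2 * (r^(2*θ)) * x ≤ 2 * r^α * s := by
      calc 2 * (r^(2*θ)) * x = (2 * (r^(2*θ) * σ)) * σ := by rw [← hσx]; ring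
        _ ≤ (2 * (r^(2*θ) * σ)) * s := by
            apply mul_le_mul_of_nonneg_left hσs
            have := mul_pos hr2θ hσ0; linarith
        _ = 2 * r^α * s := by rw [hσr]
    calc ρ^2*(1+s^2) * (2*Real.exp (-(ρ*t)))
        = (2*Real.exp (-(ρ*t)) * ρ) * (ρ*(1+s^2)) := by ring
      _ = (2*Real.exp (-(ρ*t)) * ρ) * (2 * (r^(2*θ)) * x) := by rw [h1]
      _ ≤ (2*Real.exp (-(ρ*t)) * ρ) * (2 * r^α * s) := by
          apply mul_le_mul_of_nonneg_left h2
          have := mul_pos (mul_pos two_pos hexpp) hρ0; linarith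
      _ = 2 * r^α * Real.exp (-(ρ*t)) * (2*ρ*s) := by ring
  have hT1 : (2 * (ρ * Real.sqrt (1+s^2) * Real.exp (-(ρ*t)))) / (2*ρ*s)
      ≤ 2 * Real.exp (-(ρ*t)) := by
    rw [div_le_iff₀ h2ρs]
    calc 2 * (ρ * Real.sqrt (1+s^2) * Real.exp (-(ρ*t)))
        = (2*ρ*Real.exp (-(ρ*t))) * Real.sqrt (1+s^2) := by ring
      _ ≤ (2*ρ*Real.exp (-(ρ*t))) * (2*s) := by
          apply mul_le_mul_of_nonneg_left hsq
          have := mul_pos (mul_pos two_pos hρ0) hexpp; linarith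
      _ = 2 * Real.exp (-(ρ*t)) * (2*ρ*s) := by ring
  -- assembling
  set A := ∫ x, ‖v0 x‖ with hA
  set B := ∫ x, ‖v1 x‖ with hB
  have hA0 : 0 ≤ A := integral_nonneg (fun x => norm_nonneg _)
  have hB0 : 0 ≤ B := integral_nonneg (fun x => norm_nonneg _)
  have e0 : ‖Complex.exp (lamM n δ α θ ξ * t) - Complex.exp (lamP n δ α θ ξ * t)‖
      ≤ 2 * Real.exp (-(ρ*t)) := by
    calc ‖Complex.exp (lamM n δ α θ ξ * t) - Complex.exp (lamP n δ α θ ξ * t)‖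
        ≤ ‖Complex.exp (lamM n δ α θ ξ * t)‖
          + ‖Complex.exp (lamP n δ α θ ξ * t)‖ := by
          exact norm_sub_le _ _
      _ = 2 * Real.exp (-(ρ*t)) := by rw [habsExpM, habsExpP]; ring
  have e1 : ‖lamP n δ α θ ξ * Complex.exp (lamP n δ α θ ξ * t)
        - lamM n δ α θ ξ * Complex.exp (lamM n δ α θ ξ * t)‖
      ≤ 2 * (ρ * Real.sqrt (1+s^2) * Real.exp (-(ρ*t))) := by
    calc ‖lamP n δ α θ ξ * Complex.exp (lamP n δ α θ ξ * t)
          - lamM n δ α θ ξ * Complex.exp (lamM n δ α θ ξ * t)‖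
        ≤ ‖lamP n δ α θ ξ * Complex.exp (lamP n δ α θ ξ * t)‖
          + ‖lamM n δ α θ ξ * Complex.exp (lamM n δ α θ ξ * t)‖ := by
          exact norm_sub_le _ _
      _ = 2 * (ρ * Real.sqrt (1+s^2) * Real.exp (-(ρ*t))) := by
          rw [norm_mul, norm_mul, habsP, habsM, habsExpP, habsExpM]; ring
  have f0 : ‖FourierTransform.fourier v0 ξ‖ ≤ A := fi_bound v0 ξ
  have f1 : ‖FourierTransform.fourier v1 ξ‖ ≤ B := fi_bound v1 ξ
  have hnum0 : (0:ℝ) ≤ ρ^2*(1+s^2) := by positivity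
  have hmain : ‖dtvhat n δ α θ v0 v1 t ξ‖
      ≤ 2 * r^α * Real.exp (-(ρ*t)) * A + 2 * Real.exp (-(ρ*t)) * B := by
    rw [dtvhat]
    refine (norm_add_le _ _).trans ?_
    rw [norm_mul, norm_mul, norm_div, norm_div, norm_mul, habsProd, habsD]
    apply add_le_add
    · refine (mul_le_mul
        ((div_le_div_iff_of_pos_right h2ρs).mpr (mul_le_mul_of_nonneg_left e0 hnum0))
        f0 (norm_nonneg _)
        (div_nonneg (by positivity) h2ρs.le)).trans ?_
      exact mul_le_mul_of_nonneg_right hT0 hA0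
    · refine (mul_le_mul
        ((div_le_div_iff_of_pos_right h2ρs).mpr e1)
        f1 (norm_nonneg _)
        (div_nonneg (by positivity) h2ρs.le)).trans ?_
      exact mul_le_mul_of_nonneg_right hT1 hB0
  refine hmain.trans ?_
  have hρ4 : r ^ (2*θ) / 4 ≤ ρ := by
    rw [hρdef, div_le_div_iff₀ (by norm_num) (by linarith)]
    exact mul_le_mul_of_nonneg_left (by linarith) hr2θ.le
  have hexp : Real.exp (-(ρ*t)) ≤ Real.exp (-(r ^ (2*θ) * t / 4)) := by
    rw [Real.exp_le_exp]
    have := mul_le_mul_of_nonneg_right hρ4 ht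
    linarith
  have he1 : 0 < Real.exp (-(ρ*t)) := Real.exp_pos _
  have he2 : 0 < Real.exp (-(r ^ (2*θ) * t / 4)) := Real.exp_pos _
  calc 2 * r^α * Real.exp (-(ρ*t)) * A + 2 * Real.exp (-(ρ*t)) * B
      ≤ 2 * r^α * Real.exp (-(r ^ (2*θ) * t / 4)) * A
        + 2 * Real.exp (-(r ^ (2*θ) * t / 4)) * B := by
        apply add_le_add
        · apply mul_le_mul_of_nonneg_right _ hA0
          apply mul_le_mul_of_nonneg_left hexp (by linarith)
        · apply mul_le_mul_of_nonneg_right _ hB0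
          apply mul_le_mul_of_nonneg_left hexp (by norm_num)
    _ = 2 * Real.exp (-(r ^ (2*θ) * t / 4)) * (r ^ α * A + B) := by ring

set_option maxHeartbeats 1000000 in
theorem stmt_11 (n : ℕ) (hn : 1 ≤ n) (δ α θ ε : ℝ)
    (hδ : 0 ≤ δ) (hα : 0 ≤ α) (hθ1 : α / 2 ≤ θ) (hθ2 : θ ≤ α) (hθ : 0 < θ)
    (hε0 : 0 < ε) (hε1 : ε < 1)
    (m : ℕ)
    (v0 v1 : EuclideanSpace ℝ (Fin n) → ℂ)
    (hv0 : Integrable v0) (hv1 : Integrable v1) :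
    ∃ C : ℝ, 0 < C ∧ ∀ t : ℝ, 0 ≤ t →
      (∫ ξ in {ξ : EuclideanSpace ℝ (Fin n) | 0 < ‖ξ‖ ∧ ‖ξ‖ < ε},
          ‖ξ‖ ^ (2 * m) * ‖dtvhat n δ α θ v0 v1 t ξ‖ ^ 2) ^ (1 / 2 : ℝ)
        ≤ C * ((∫ x, ‖v0 x‖) *
              (1 + t) ^ (-((n : ℝ) / 4 + (m : ℝ) / 2 + α / 2) / θ)
            + (∫ x, ‖v1 x‖) *
              (1 + t) ^ (-((n : ℝ) / 4 + (m : ℝ) / 2) / θ)) := by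
  obtain ⟨C₁, hC₁, hJ1⟩ := Jbound n hn ((m:ℝ) + α) θ ε (by positivity) hθ hε0 hε1
  obtain ⟨C₂, hC₂, hJ2⟩ := Jbound n hn (m:ℝ) θ ε (by positivity) hθ hε0 hε1
  set S : Set (EuclideanSpace ℝ (Fin n)) := {ξ : EuclideanSpace ℝ (Fin n) | 0 < ‖ξ‖ ∧ ‖ξ‖ < ε} with hSdef
  have hSmeas : MeasurableSet S := by
    have : S = (fun ξ : EuclideanSpace ℝ (Fin n) => ‖ξ‖) ⁻¹' (Set.Ioo 0 ε) := rfl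
    rw [this]; exact (isOpen_Ioo.preimage continuous_norm).measurableSet
  have hSfin : volume S < ⊤ := by
    refine lt_of_le_of_lt (measure_mono ?_) (measure_ball_lt_top (x := (0:EuclideanSpace ℝ (Fin n))) (r := 1))
    intro ξ hξ
    simp only [Metric.mem_ball, dist_zero_right]
    exact lt_trans hξ.2 hε1
  set A := ∫ x, ‖v0 x‖ with hA
  set B := ∫ x, ‖v1 x‖ with hB
  have hA0 : 0 ≤ A := integral_nonneg (fun x => norm_nonneg _)
  have hB0 : 0 ≤ B := integral_nonneg (fun x => norm_nonneg _)
  refine ⟨Real.sqrt (8*C₁) + Real.sqrt (8*C₂), by positivity, fun t ht => ?_⟩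
  have h1t : (0:ℝ) < 1 + t := by linarith
  set g1 : EuclideanSpace ℝ (Fin n) → ℝ := fun ξ => ‖ξ‖ ^ (2*((m:ℝ)+α)) * Real.exp (-(‖ξ‖ ^ (2*θ) * t / 2)) with hg1
  set g2 : EuclideanSpace ℝ (Fin n) → ℝ := fun ξ => ‖ξ‖ ^ (2*(m:ℝ)) * Real.exp (-(‖ξ‖ ^ (2*θ) * t / 2)) with hg2
  have hg1c : Continuous g1 := by
    apply Continuous.mul (continuous_norm.rpow_const (fun x => Or.inr (by positivity)))
    exact Real.continuous_exp.comp
      ((((continuous_norm.rpow_const (fun x => Or.inr (by positivity))).mul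
        continuous_const).div_const 2).neg)
  have hg2c : Continuous g2 := by
    apply Continuous.mul (continuous_norm.rpow_const (fun x => Or.inr (by positivity)))
    exact Real.continuous_exp.comp
      ((((continuous_norm.rpow_const (fun x => Or.inr (by positivity))).mul
        continuous_const).div_const 2).neg)
  have hgle : ∀ (p : ℝ), 0 ≤ p → ∀ ξ ∈ S,
      ‖ξ‖ ^ p * Real.exp (-(‖ξ‖ ^ (2*θ) * t / 2)) ≤ 1 := by
    intro p hp ξ hξ
    have h1 : ‖ξ‖ ^ p ≤ 1 :=
      Real.rpow_le_one (norm_nonneg ξ) (le_of_lt (lt_trans hξ.2 hε1)) hp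
    have h2 : Real.exp (-(‖ξ‖ ^ (2*θ) * t / 2)) ≤ 1 := by
      rw [Real.exp_le_one_iff]
      have : 0 ≤ ‖ξ‖ ^ (2*θ) * t / 2 := by positivity
      linarith
    have h3 : 0 ≤ ‖ξ‖ ^ p := Real.rpow_nonneg (norm_nonneg ξ) p
    calc ‖ξ‖ ^ p * Real.exp (-(‖ξ‖ ^ (2*θ) * t / 2)) ≤ 1 * 1 :=
        mul_le_mul h1 h2 (Real.exp_pos _).le zero_le_one
      _ = 1 := by norm_num
  have hint1 : IntegrableOn g1 S := by
    apply Integrable.mono' ((integrableOn_const_iff (C := (1:ℝ))).mpr (Or.inr hSfin))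
      hg1c.aestronglyMeasurable.restrict
    refine (ae_restrict_iff' hSmeas).mpr (Filter.Eventually.of_forall fun ξ hξ => ?_)
    rw [Real.norm_eq_abs, abs_of_nonneg (by positivity)]
    exact hgle _ (by positivity) ξ hξ
  have hint2 : IntegrableOn g2 S := by
    apply Integrable.mono' ((integrableOn_const_iff (C := (1:ℝ))).mpr (Or.inr hSfin))
      hg2c.aestronglyMeasurable.restrict
    refine (ae_restrict_iff' hSmeas).mpr (Filter.Eventually.of_forall fun ξ hξ => ?_)
    rw [Real.norm_eq_abs, abs_of_nonneg (by positivity)]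
    exact hgle _ (by positivity) ξ hξ
  -- pointwise domination
  have hpt : ∀ ξ ∈ S, ‖ξ‖ ^ (2 * m) * ‖dtvhat n δ α θ v0 v1 t ξ‖ ^ 2
      ≤ 8*A^2 * g1 ξ + 8*B^2 * g2 ξ := by
    intro ξ hξ
    have hr0 : 0 < ‖ξ‖ := hξ.1
    have hr1 : ‖ξ‖ < 1 := lt_trans hξ.2 hε1
    have hb := pointwise_bound n δ α θ hδ hα hθ1 hθ v0 v1 t ht ξ hr0 hr1
    rw [← hA, ← hB] at hb
    set e := Real.exp (-(‖ξ‖ ^ (2*θ) * t / 4)) with hedef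
    have he0 : 0 < e := Real.exp_pos _
    have hE : e^2 = Real.exp (-(‖ξ‖ ^ (2*θ) * t / 2)) := by
      rw [sq, ← Real.exp_add]; congr 1; ring
    have hsq : ‖dtvhat n δ α θ v0 v1 t ξ‖ ^ 2
        ≤ (2 * e * (‖ξ‖ ^ α * A + B))^2 :=
      pow_le_pow_left₀ (norm_nonneg _) hb 2
    have hra2 : (‖ξ‖ ^ α)^2 = ‖ξ‖ ^ (2*α) := by
      rw [← Real.rpow_natCast (‖ξ‖ ^ α) 2, ← Real.rpow_mul hr0.le]
      congr 1; push_cast; ring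
    have hcross : (‖ξ‖ ^ α * A + B)^2 ≤ 2*((‖ξ‖ ^ α)^2 * A^2 + B^2) := by
      have hid : (‖ξ‖ ^ α * A + B)^2
          = 2*((‖ξ‖ ^ α)^2*A^2 + B^2) - (‖ξ‖ ^ α * A - B)^2 := by ring
      rw [hid]
      have := sq_nonneg (‖ξ‖ ^ α * A - B)
      linarith
    have hnat : ‖ξ‖ ^ (2 * m) = ‖ξ‖ ^ (2*(m:ℝ)) := by
      rw [← Real.rpow_natCast ‖ξ‖ (2*m)]
      congr 1; push_cast; ring
    have hmerge : ‖ξ‖ ^ (2*(m:ℝ)) * ‖ξ‖ ^ (2*α) = ‖ξ‖ ^ (2*((m:ℝ)+α)) := by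
      rw [← Real.rpow_add hr0]; congr 1; ring
    have hrm0 : 0 ≤ ‖ξ‖ ^ (2*(m:ℝ)) := Real.rpow_nonneg (norm_nonneg ξ) _
    calc ‖ξ‖ ^ (2 * m) * ‖dtvhat n δ α θ v0 v1 t ξ‖ ^ 2
        ≤ ‖ξ‖ ^ (2*(m:ℝ)) * (2 * e * (‖ξ‖ ^ α * A + B))^2 := by
          rw [hnat]; exact mul_le_mul_of_nonneg_left hsq hrm0
      _ = ‖ξ‖ ^ (2*(m:ℝ)) * (4 * e^2 * (‖ξ‖ ^ α * A + B)^2) := by ring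
      _ ≤ ‖ξ‖ ^ (2*(m:ℝ)) * (4 * e^2 * (2*((‖ξ‖ ^ α)^2 * A^2 + B^2))) := by
          apply mul_le_mul_of_nonneg_left _ hrm0
          apply mul_le_mul_of_nonneg_left hcross
          positivity
      _ = 8*A^2 * ((‖ξ‖ ^ (2*(m:ℝ)) * ‖ξ‖ ^ (2*α)) * e^2)
          + 8*B^2 * (‖ξ‖ ^ (2*(m:ℝ)) * e^2) := by rw [hra2]; ring
      _ = 8*A^2 * g1 ξ + 8*B^2 * g2 ξ := by rw [hmerge, hE, hg1, hg2]
  -- integral bounds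
  have hmono : (∫ ξ in S, ‖ξ‖ ^ (2 * m) * ‖dtvhat n δ α θ v0 v1 t ξ‖ ^ 2)
      ≤ ∫ ξ in S, (8*A^2 * g1 ξ + 8*B^2 * g2 ξ) := by
    apply integral_mono_of_nonneg
    · filter_upwards with ξ; positivity
    · exact ((hint1.const_mul _).add (hint2.const_mul _))
    · exact (ae_restrict_iff' hSmeas).mpr (Filter.Eventually.of_forall hpt)
  have hsplit : (∫ ξ in S, (8*A^2 * g1 ξ + 8*B^2 * g2 ξ))
      = 8*A^2 * (∫ ξ in S, g1 ξ) + 8*B^2 * (∫ ξ in S, g2 ξ) := by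
    rw [integral_add (hint1.const_mul _) (hint2.const_mul _),
      integral_const_mul, integral_const_mul]
  set X₁ := (1+t) ^ (-(((n:ℝ)/2 + ((m:ℝ)+α))/θ)) with hX₁
  set X₂ := (1+t) ^ (-(((n:ℝ)/2 + (m:ℝ))/θ)) with hX₂
  have hX₁0 : 0 ≤ X₁ := Real.rpow_nonneg h1t.le _
  have hX₂0 : 0 ≤ X₂ := Real.rpow_nonneg h1t.le _
  have hg1b : (∫ ξ in S, g1 ξ) ≤ C₁ * X₁ := hJ1 t ht
  have hg2b : (∫ ξ in S, g2 ξ) ≤ C₂ * X₂ := hJ2 t ht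
  have hg1nn : 0 ≤ ∫ ξ in S, g1 ξ := integral_nonneg (fun ξ => by positivity)
  have hg2nn : 0 ≤ ∫ ξ in S, g2 ξ := integral_nonneg (fun ξ => by positivity)
  -- total bound on the integral
  have htot : (∫ ξ in S, ‖ξ‖ ^ (2 * m) * ‖dtvhat n δ α θ v0 v1 t ξ‖ ^ 2)
      ≤ 8*A^2*(C₁*X₁) + 8*B^2*(C₂*X₂) := by
    refine hmono.trans (hsplit.le.trans ?_)
    apply add_le_add
    · exact mul_le_mul_of_nonneg_left hg1b (by positivity)
    · exact mul_le_mul_of_nonneg_left hg2b (by positivity)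
  have hPnn : 0 ≤ ∫ ξ in S, ‖ξ‖ ^ (2 * m) * ‖dtvhat n δ α θ v0 v1 t ξ‖ ^ 2 :=
    integral_nonneg (fun ξ => by positivity)
  -- take square roots
  have hsqrt : (∫ ξ in S, ‖ξ‖ ^ (2 * m) * ‖dtvhat n δ α θ v0 v1 t ξ‖ ^ 2) ^ (1/2 : ℝ)
      ≤ Real.sqrt (8*C₁) * A * Real.sqrt X₁ + Real.sqrt (8*C₂) * B * Real.sqrt X₂ := by
    rw [← Real.sqrt_eq_rpow]
    have h1 : 8*A^2*(C₁*X₁) + 8*B^2*(C₂*X₂)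
        ≤ (Real.sqrt (8*C₁) * A * Real.sqrt X₁ + Real.sqrt (8*C₂) * B * Real.sqrt X₂)^2 := by
      have e1 : (Real.sqrt (8*C₁))^2 = 8*C₁ := Real.sq_sqrt (by positivity)
      have e2 : (Real.sqrt (8*C₂))^2 = 8*C₂ := Real.sq_sqrt (by positivity)
      have e3 : (Real.sqrt X₁)^2 = X₁ := Real.sq_sqrt hX₁0
      have e4 : (Real.sqrt X₂)^2 = X₂ := Real.sq_sqrt hX₂0
      have hcross : 0 ≤ 2*(Real.sqrt (8*C₁) * A * Real.sqrt X₁) *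
          (Real.sqrt (8*C₂) * B * Real.sqrt X₂) := by positivity
      calc 8*A^2*(C₁*X₁) + 8*B^2*(C₂*X₂)
          = (Real.sqrt (8*C₁))^2*A^2*(Real.sqrt X₁)^2
            + (Real.sqrt (8*C₂))^2*B^2*(Real.sqrt X₂)^2 := by rw [e1, e2, e3, e4]; ring
        _ ≤ (Real.sqrt (8*C₁) * A * Real.sqrt X₁ + Real.sqrt (8*C₂) * B * Real.sqrt X₂)^2 := by
            have hid : (Real.sqrt (8*C₁) * A * Real.sqrt X₁
                + Real.sqrt (8*C₂) * B * Real.sqrt X₂)^2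
              = (Real.sqrt (8*C₁))^2*A^2*(Real.sqrt X₁)^2
                + (Real.sqrt (8*C₂))^2*B^2*(Real.sqrt X₂)^2
                + 2*(Real.sqrt (8*C₁) * A * Real.sqrt X₁) *
                  (Real.sqrt (8*C₂) * B * Real.sqrt X₂) := by ring
            rw [hid]; linarith
    calc Real.sqrt (∫ ξ in S, ‖ξ‖ ^ (2 * m) * ‖dtvhat n δ α θ v0 v1 t ξ‖ ^ 2)
        ≤ Real.sqrt ((Real.sqrt (8*C₁) * A * Real.sqrt X₁
            + Real.sqrt (8*C₂) * B * Real.sqrt X₂)^2) := Real.sqrt_le_sqrt (htot.trans h1)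
      _ = Real.sqrt (8*C₁) * A * Real.sqrt X₁ + Real.sqrt (8*C₂) * B * Real.sqrt X₂ :=
          Real.sqrt_sq (by positivity)
  -- convert sqrt of powers
  have hXs1 : Real.sqrt X₁ = (1 + t) ^ (-((n : ℝ) / 4 + (m : ℝ) / 2 + α / 2) / θ) := by
    rw [hX₁, Real.sqrt_eq_rpow, ← Real.rpow_mul h1t.le]
    congr 1
    field_simp
    ring
  have hXs2 : Real.sqrt X₂ = (1 + t) ^ (-((n : ℝ) / 4 + (m : ℝ) / 2) / θ) := by
    rw [hX₂, Real.sqrt_eq_rpow, ← Real.rpow_mul h1t.le]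
    congr 1
    field_simp
    ring
  rw [hXs1, hXs2] at hsqrt
  refine hsqrt.trans ?_
  set p₁ := (1 + t) ^ (-((n : ℝ) / 4 + (m : ℝ) / 2 + α / 2) / θ) with hp₁
  set p₂ := (1 + t) ^ (-((n : ℝ) / 4 + (m : ℝ) / 2) / θ) with hp₂
  have hp₁0 : 0 ≤ p₁ := Real.rpow_nonneg h1t.le _
  have hp₂0 : 0 ≤ p₂ := Real.rpow_nonneg h1t.le _
  have c1 : 0 ≤ Real.sqrt (8*C₁) := Real.sqrt_nonneg _
  have c2 : 0 ≤ Real.sqrt (8*C₂) := Real.sqrt_nonneg _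
  have k1 : 0 ≤ Real.sqrt (8*C₂) * (A * p₁) := by positivity
  have k2 : 0 ≤ Real.sqrt (8*C₁) * (B * p₂) := by positivity
  have expand : (Real.sqrt (8*C₁) + Real.sqrt (8*C₂)) * (A * p₁ + B * p₂)
      = Real.sqrt (8*C₁) * A * p₁ + Real.sqrt (8*C₂) * B * p₂
        + (Real.sqrt (8*C₂) * (A * p₁) + Real.sqrt (8*C₁) * (B * p₂)) := by ring
  linarith [expand]
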